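/- arXiv:1607.02790 — 2 statements merged into one kernel-verified Lean document; each statement's English description precedes it below -/
import Mathlib

section
/- Refinement of tests implies refinement of hyper conditionals: let s : A → D(Fin n) and t : A → D(Fin m) be tests such that s ⊑ t, i.e., there exists h : Fin n → D(Fin m) with h_*(s(a)) = t(a) for all a ∈ A. Then for every ω ∈ D(A), the hyper distributions satisfy ω‖s ⊑ ω‖t in the hyper-refinement order. -/
open scoped ENNReal

noncomputable section

namespace HyperNorm

variable {A B : Type*} {n m : ℕ}

/-- `ω[i] = Σ_a ω(i,a)`. -/
def fmass (ω : PMF (Fin n × A)) (i : Fin n) : ℝ≥0∞ := ∑' a, ω (i, a)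

lemma tsum_fmass (ω : PMF (Fin n × A)) : ∑' i, fmass ω i = 1 := by
  simp only [fmass]
  rw [← ENNReal.tsum_prod']
  exact ω.tsum_coe

lemma fmass_ne_top (ω : PMF (Fin n × A)) (i : Fin n) : fmass ω i ≠ ⊤ := by
  apply ne_top_of_le_ne_top ENNReal.one_ne_top
  rw [← tsum_fmass ω]
  exact ENNReal.le_tsum i

/-- The first marginal `i ↦ ω[i]` as a distribution. -/
def fstM (ω : PMF (Fin n × A)) : PMF (Fin n) :=
  ⟨fun i => fmass ω i, ENNReal.summable.hasSum_iff.mpr (tsum_fmass ω)⟩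

/-- The normalised `i`-th component `ω_i(a) = ω(i,a)/ω[i]` (junk value if `ω[i] = 0`,
which never contributes to `hnorm` below since it is weighted by `ω[i] = 0`). -/
def ncond (ω : PMF (Fin n × A)) (i : Fin n) : PMF A :=
  if h : fmass ω i ≠ 0 then
    ⟨fun a => ω (i, a) / fmass ω i,
      ENNReal.summable.hasSum_iff.mpr (by
        simp only [div_eq_mul_inv]
        rw [ENNReal.tsum_mul_right, ← div_eq_mul_inv]
        exact ENNReal.div_self h (fmass_ne_top ω i))⟩
  else PMF.pure (ω.support_nonempty.some.2)

/-- Hyper normalisation `N(ω) = Σ_{i with ω[i] ≠ 0} ω[i]·η(i, ω_i)`. -/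
def hnorm (ω : PMF (Fin n × A)) : PMF (Fin n × PMF A) :=
  (fstM ω).bind fun i => PMF.pure (i, ncond ω i)

/-- Graph map `gr(f)(x)(y,x') = f(x)(y) if x' = x, else 0`. -/
def gr {X Y : Type*} (f : X → PMF Y) : X → PMF (Y × X) :=
  fun x => (f x).map fun y => (y, x)

lemma fstM_apply (ω : PMF (Fin n × A)) (i : Fin n) : fstM ω i = fmass ω i := rfl

lemma ncond_apply (ω : PMF (Fin n × A)) {i : Fin n} (h : fmass ω i ≠ 0) (a : A) :
    ncond ω i a = ω (i, a) / fmass ω i := by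
  unfold ncond; exact congrArg (fun p : PMF A => p a) (dif_pos h)

lemma apply_le_fmass (ω : PMF (Fin n × A)) (i : Fin n) (a : A) : ω (i, a) ≤ fmass ω i :=
  ENNReal.le_tsum a

lemma mul_ncond (ω : PMF (Fin n × A)) (i : Fin n) (a : A) :
    fmass ω i * ncond ω i a = ω (i, a) := by
  by_cases h : fmass ω i = 0
  · rw [h, zero_mul]
    exact (le_antisymm (h ▸ apply_le_fmass ω i a) zero_le).symm
  · rw [ncond_apply ω h, mul_comm, ENNReal.div_mul_cancel h (fmass_ne_top ω i)]

lemma map_snd_apply (ω : PMF (Fin n × A)) (a : A) :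
    ω.map Prod.snd a = ∑' i, ω (i, a) := by
  rw [PMF.map_apply, ENNReal.tsum_prod']
  refine tsum_congr fun i => ?_
  refine (tsum_eq_single a fun b hb => ?_).trans (if_pos rfl)
  exact if_neg (Ne.symm hb)

lemma bind_ncond (ω : PMF (Fin n × A)) : (fstM ω).bind (ncond ω) = ω.map Prod.snd :=
  PMF.ext fun a => by
    rw [PMF.bind_apply, map_snd_apply]
    exact tsum_congr fun i => mul_ncond ω i a

lemma grBind_apply (f : A → PMF (Fin n)) (ω : PMF A) (i : Fin n) (a : A) :
    (ω.bind (gr f)) (i, a) = ω a * f a i := by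
  rw [PMF.bind_apply]
  refine (tsum_eq_single a fun a' ha' => ?_).trans ?_
  · simp [gr, PMF.map_apply, Prod.ext_iff, Ne.symm ha']
  · simp only [gr, PMF.map_apply]
    congr 1
    refine (tsum_eq_single i fun k hk => ?_).trans (by simp)
    simp [Prod.ext_iff, Ne.symm hk]

lemma rho_apply (σ : PMF (Fin n × A)) (h : Fin n → PMF (Fin m)) (j : Fin m) (i : Fin n) :
    (σ.bind (fun p => (h p.1).map (fun j => (j, p.1)))) (j, i) = fmass σ i * h i j := by
  rw [PMF.bind_apply, ENNReal.tsum_prod']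
  refine (tsum_eq_single i fun i' hi' => ?_).trans ?_
  · simp [PMF.map_apply, Prod.ext_iff, Ne.symm hi']
  · rw [fmass, ← ENNReal.tsum_mul_right]
    refine tsum_congr fun a => ?_
    congr 1
    simp only [PMF.map_apply]
    refine (tsum_eq_single j fun k hk => ?_).trans (by simp)
    simp [Prod.ext_iff, Ne.symm hk]

/-- refinement of tests implies refinement of hyper conditionals:
if `s ⊑ t` via some `h` with `h_*(s a) = t a`, then `ω‖s ⊑ ω‖t` in the
hyper-refinement order. -/
theorem test_refinement_implies_hyper_refinement
    (s : A → PMF (Fin n)) (t : A → PMF (Fin m))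
    (hst : ∃ h : Fin n → PMF (Fin m), ∀ a, (s a).bind h = t a)
    (ω : PMF A) :
    ∃ Ω : PMF (Fin m × PMF (Fin n × PMF A)),
      (Ω.map Prod.snd).bind id = hnorm (ω.bind (gr s)) ∧
      Ω.map (fun p => (p.1, (p.2.map Prod.snd).bind id)) = hnorm (ω.bind (gr t)) := by
  obtain ⟨h, ht⟩ := hst
  set σ : PMF (Fin n × A) := ω.bind (gr s) with hσdef
  set τ : PMF (Fin m × A) := ω.bind (gr t) with hτdef
  set ρ : PMF (Fin m × Fin n) := σ.bind (fun p => (h p.1).map (fun j => (j, p.1))) with hρdef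
  have hρ : ∀ j i, ρ (j, i) = fmass σ i * h i j := fun j i => rho_apply σ h j i
  have hτa : ∀ j a, τ (j, a) = ∑' i, σ (i, a) * h i j := by
    intro j a
    rw [hτdef, grBind_apply, ← ht a, PMF.bind_apply, ← ENNReal.tsum_mul_left]
    exact tsum_congr fun i => by rw [hσdef, grBind_apply]; ring
  have hfm : ∀ j, fmass ρ j = fmass τ j := by
    intro j
    rw [fmass, fmass]
    rw [show (∑' a, τ (j, a)) = ∑' a, ∑' i, σ (i, a) * h i j from tsum_congr fun a => hτa j a]
    rw [ENNReal.tsum_comm]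
    exact tsum_congr fun i => by rw [hρ, fmass, ENNReal.tsum_mul_right]
  have hfstM : fstM ρ = fstM τ := PMF.ext fun j => by rw [fstM_apply, fstM_apply, hfm]
  have hmarg : ρ.map Prod.snd = fstM σ := by
    refine PMF.ext fun i => ?_
    rw [map_snd_apply, fstM_apply]
    simp only [hρ]
    rw [ENNReal.tsum_mul_left, (h i).tsum_coe, mul_one]
  have hkey : ∀ j, fmass τ j ≠ 0 → (ncond ρ j).bind (fun i => ncond σ i) = ncond τ j := by
    intro j hj
    have hρj : fmass ρ j ≠ 0 := by rw [hfm]; exact hj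
    refine PMF.ext fun a => ?_
    rw [PMF.bind_apply, ncond_apply τ hj]
    have step : ∀ i, ncond ρ j i * ncond σ i a = σ (i, a) * h i j * (fmass τ j)⁻¹ := by
      intro i
      rw [ncond_apply ρ hρj, hρ, hfm, div_eq_mul_inv, ← mul_ncond σ i a]
      ring
    rw [tsum_congr step, ENNReal.tsum_mul_right, ← hτa, div_eq_mul_inv]
  refine ⟨(fstM ρ).bind (fun j =>
      PMF.pure (j, (ncond ρ j).bind (fun i => PMF.pure (i, ncond σ i)))), ?_, ?_⟩
  · rw [PMF.bind_map, PMF.bind_bind]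
    simp only [PMF.pure_bind, Function.comp, id_eq]
    rw [← PMF.bind_bind, bind_ncond, hmarg]
    rfl
  · show (_ : PMF _).map _ = _
    rw [PMF.map, PMF.bind_bind]
    simp only [PMF.pure_bind, Function.comp]
    rw [hfstM]
    refine PMF.ext fun x => ?_
    rw [PMF.bind_apply, hnorm, PMF.bind_apply]
    refine tsum_congr fun j => ?_
    by_cases h0 : fmass τ j = 0
    · rw [fstM_apply, h0, zero_mul, zero_mul]
    · congr 2
      rw [PMF.bind_map, PMF.bind_bind]
      simp only [PMF.pure_bind, Function.comp, id]
      rw [hkey j h0]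

end HyperNorm
end
end

section
/- Refinement of hyper conditionals implies refinement of tests: let s : A → D(Fin n) and t : A → D(Fin m) be tests, and suppose ω ∈ D(A) satisfies ω(a) ≠ 0 for all a ∈ A and s_*(ω)(i) ≠ 0 for all i ∈ Fin n. If ω‖s ⊑ ω‖t in the hyper-refinement order, then s ⊑ t, i.e., there exists h : Fin n → D(Fin m) with h_*(s(a)) = t(a) for all a ∈ A. -/
open scoped ENNReal

noncomputable section

namespace HyperNorm

variable {A B : Type*} {n m : ℕ}

/-! ### Auxiliary lemmas -/

lemma tsum_map_mul {α β : Type*} (p : PMF α) (f : α → β) (g : β → ℝ≥0∞) :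
    ∑' b, (p.map f) b * g b = ∑' a, p a * g (f a) := by
  classical
  simp only [PMF.map_apply, ENNReal.tsum_mul_right.symm]
  rw [ENNReal.tsum_comm]
  refine tsum_congr fun a => ?_
  rw [tsum_eq_single (f a) (by intro b hb; rw [if_neg hb, zero_mul])]
  simp

lemma bind_apply_mul {α β : Type*} (p : PMF α) (f : α → PMF β) (g : β → ℝ≥0∞) :
    ∑' b, (p.bind f) b * g b = ∑' a, p a * ∑' b, (f a) b * g b := by
  simp only [PMF.bind_apply, ENNReal.tsum_mul_right.symm]
  rw [ENNReal.tsum_comm]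
  refine tsum_congr fun a => ?_
  rw [← ENNReal.tsum_mul_left]
  exact tsum_congr fun b => (mul_assoc _ _ _)

lemma ncond_apply_of_ne (ν : PMF (Fin n × A)) (i : Fin n) (h : fmass ν i ≠ 0) (a : A) :
    ncond ν i a = ν (i, a) / fmass ν i := by
  have e : ncond ν i = _ := dif_pos h
  rw [e]
  rfl

lemma fmass_mul_ncond (ν : PMF (Fin n × A)) (i : Fin n) (a : A) :
    fmass ν i * ncond ν i a = ν (i, a) := by
  by_cases h : fmass ν i = 0
  · rw [h, zero_mul]
    have : ν (i, a) ≤ fmass ν i := ENNReal.le_tsum a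
    rw [h] at this
    exact (le_zero_iff.mp this).symm
  · rw [ncond_apply_of_ne ν i h]
    exact ENNReal.mul_div_cancel h (fmass_ne_top ν i)

lemma hnorm_apply_self (ν : PMF (Fin n × A)) (i : Fin n) :
    hnorm ν (i, ncond ν i) = fmass ν i := by
  classical
  simp only [hnorm, PMF.bind_apply, PMF.pure_apply]
  rw [tsum_eq_single i (by
    intro i' hi'
    have : (i, ncond ν i) ≠ (i', ncond ν i') := by
      simp [Prod.ext_iff]; intro h; exact absurd h (Ne.symm hi')
    simp [this])]
  simp [fstM]
  rfl

lemma hnorm_apply_ne (ν : PMF (Fin n × A)) (i : Fin n) (φ : PMF A)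
    (h : φ ≠ ncond ν i) : hnorm ν (i, φ) = 0 := by
  classical
  simp only [hnorm, PMF.bind_apply, PMF.pure_apply]
  rw [ENNReal.tsum_eq_zero]
  intro i'
  by_cases hii : i = i'
  · subst hii
    have : (i, φ) ≠ (i, ncond ν i) := by simp [Prod.ext_iff, h]
    simp [this]
  · have : (i, φ) ≠ (i', ncond ν i') := by simp [Prod.ext_iff]; intro h'; exact absurd h' hii
    simp [this]

lemma bind_gr_apply (ω : PMF A) (s : A → PMF B) (i : B) (a : A) :
    (ω.bind (gr s)) (i, a) = ω a * s a i := by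
  classical
  simp only [PMF.bind_apply, gr, PMF.map_apply]
  rw [tsum_eq_single a (by
    intro a' ha'
    have : ∀ y, (i, a) ≠ (y, a') := by intro y; simp [Prod.ext_iff]; intro _; exact Ne.symm ha'
    simp [this])]
  congr 1
  rw [tsum_eq_single i (by intro y hy; simp [Prod.ext_iff, Ne.symm hy])]
  simp

lemma fmass_bind_gr (ω : PMF A) (s : A → PMF (Fin n)) (i : Fin n) :
    fmass (ω.bind (gr s)) i = (ω.bind s) i := by
  rw [PMF.bind_apply]
  exact tsum_congr fun a => bind_gr_apply ω s i a

/-- refinement of hyper conditionals implies refinement of tests: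
if `ω` has full support, `s_*(ω)` has full support, and `ω‖s ⊑ ω‖t` in the
hyper-refinement order, then `s ⊑ t`. -/
theorem hyper_refinement_implies_test_refinement
    (s : A → PMF (Fin n)) (t : A → PMF (Fin m)) (ω : PMF A)
    (hω : ∀ a, ω a ≠ 0) (hs : ∀ i, (ω.bind s) i ≠ 0)
    (href : ∃ Ω : PMF (Fin m × PMF (Fin n × PMF A)),
      (Ω.map Prod.snd).bind id = hnorm (ω.bind (gr s)) ∧
      Ω.map (fun p => (p.1, (p.2.map Prod.snd).bind id)) = hnorm (ω.bind (gr t))) :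
    ∃ h : Fin n → PMF (Fin m), ∀ a, (s a).bind h = t a := by
  classical
  obtain ⟨Ω, h1, h2⟩ := href
  set ν : PMF (Fin n × A) := ω.bind (gr s) with hν
  set ν' : PMF (Fin m × A) := ω.bind (gr t) with hν'
  set c : Fin n → PMF A := fun i => ncond ν i with hc
  have hSfm : ∀ i, fmass ν i = (ω.bind s) i := fun i => fmass_bind_gr ω s i
  have hS0 : ∀ i, fmass ν i ≠ 0 := fun i => (hSfm i) ▸ hs i
  -- identity from the first marginal condition
  have h1' : ∀ (i : Fin n) (φ : PMF A),
      (∑' p : Fin m × PMF (Fin n × PMF A), Ω p * p.2 (i, φ)) = hnorm ν (i, φ) := by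
    intro i φ
    rw [← h1, PMF.bind_apply]
    simpa using (tsum_map_mul Ω Prod.snd (fun Φ => Φ (i, φ))).symm
  -- support of Ω lies over kernels concentrated on the conditionals of ν
  have hker : ∀ p : Fin m × PMF (Fin n × PMF A), Ω p ≠ 0 →
      ∀ (i : Fin n) (φ : PMF A), φ ≠ c i → p.2 (i, φ) = 0 := by
    intro p hp i φ hφ
    have h0 : (∑' p : Fin m × PMF (Fin n × PMF A), Ω p * p.2 (i, φ)) = 0 := by
      rw [h1' i φ]; exact hnorm_apply_ne ν i φ hφ
    have := ENNReal.tsum_eq_zero.mp h0 p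
    exact (mul_eq_zero.mp this).resolve_left hp
  -- the averaged second component of any kernel in the support
  have hmu : ∀ p : Fin m × PMF (Fin n × PMF A), Ω p ≠ 0 → ∀ a : A,
      ((p.2.map Prod.snd).bind id) a = ∑' i : Fin n, p.2 (i, c i) * (c i) a := by
    intro p hp a
    rw [PMF.bind_apply]
    have := tsum_map_mul p.2 Prod.snd (fun φ => φ a)
    simp only [id] at this ⊢
    rw [this, ENNReal.tsum_prod']
    refine tsum_congr fun i => ?_
    rw [tsum_eq_single (c i) (by intro φ hφ; rw [hker p hp i φ hφ, zero_mul])]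
  -- the weights
  set w : Fin n → Fin m → ℝ≥0∞ :=
    fun i j => ∑' p : Fin m × PMF (Fin n × PMF A),
      if p.1 = j then Ω p * p.2 (i, c i) else 0 with hw
  have hwsum : ∀ i, ∑' j, w i j = fmass ν i := by
    intro i
    rw [← hnorm_apply_self ν i, ← h1' i (c i)]
    simp only [hw]
    rw [ENNReal.tsum_comm]
    refine tsum_congr fun p => ?_
    rw [tsum_eq_single p.1 (by intro j hj; simp [Ne.symm hj])]
    simp
  -- the main balance equation
  have hE : ∀ (j : Fin m) (a : A),
      (∑' i : Fin n, w i j * (c i) a) = ω a * t a j := by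
    intro j a
    have key := tsum_map_mul Ω (fun p => (p.1, (p.2.map Prod.snd).bind id))
      (fun q => if q.1 = j then q.2 a else 0)
    rw [h2] at key
    -- compute the LHS of key (sum over hnorm ν')
    have hrhs : (∑' q : Fin m × PMF A, hnorm ν' q * (if q.1 = j then q.2 a else 0))
        = ω a * t a j := by
      rw [ENNReal.tsum_prod']
      have : ∀ j' : Fin m, (∑' ψ : PMF A, hnorm ν' (j', ψ) * (if j' = j then ψ a else 0))
          = if j' = j then fmass ν' j' * ncond ν' j' a else 0 := by
        intro j'
        rw [tsum_eq_single (ncond ν' j')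
          (by intro ψ hψ; rw [hnorm_apply_ne ν' j' ψ hψ, zero_mul])]
        rw [hnorm_apply_self]
        by_cases hj : j' = j <;> simp [hj]
      rw [tsum_congr this, tsum_eq_single j (by intro j' hj'; simp [hj'])]
      rw [if_pos rfl, fmass_mul_ncond]
      exact bind_gr_apply ω t j a
    rw [hrhs] at key
    -- rewrite the RHS of key using hmu
    have this1 : ∀ p : Fin m × PMF (Fin n × PMF A),
        Ω p * (if (p.1, (p.2.map Prod.snd).bind id).1 = j
            then ((p.2.map Prod.snd).bind id) a else 0)
        = ∑' i : Fin n, (if p.1 = j then Ω p * p.2 (i, c i) else 0) * (c i) a := by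
      intro p
      by_cases hp : Ω p = 0
      · simp [hp]
      · by_cases hj : p.1 = j
        · simp only [if_pos hj]
          rw [hmu p hp a, ← ENNReal.tsum_mul_left]
          exact tsum_congr fun i => (mul_assoc _ _ _).symm
        · simp only [if_neg hj]
          simp
    calc ∑' i : Fin n, w i j * (c i) a
        = ∑' (i : Fin n), ∑' p : Fin m × PMF (Fin n × PMF A),
            (if p.1 = j then Ω p * p.2 (i, c i) else 0) * (c i) a :=
          tsum_congr fun i => ENNReal.tsum_mul_right.symm
      _ = ∑' p : Fin m × PMF (Fin n × PMF A), ∑' (i : Fin n),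
            (if p.1 = j then Ω p * p.2 (i, c i) else 0) * (c i) a := ENNReal.tsum_comm
      _ = ∑' p : Fin m × PMF (Fin n × PMF A),
            Ω p * (if (p.1, (p.2.map Prod.snd).bind id).1 = j
              then ((p.2.map Prod.snd).bind id) a else 0) :=
          tsum_congr fun p => (this1 p).symm
      _ = ω a * t a j := key.symm
  -- construct h
  refine ⟨fun i => ⟨fun j => w i j / fmass ν i, ENNReal.summable.hasSum_iff.mpr ?_⟩, ?_⟩
  · simp only [div_eq_mul_inv]
    rw [ENNReal.tsum_mul_right, hwsum, ← div_eq_mul_inv]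
    exact ENNReal.div_self (hS0 i) (fmass_ne_top ν i)
  · intro a
    refine PMF.ext fun j => ?_
    show ∑' i, s a i * (w i j / fmass ν i) = t a j
    have hωa : ω a ≠ 0 := hω a
    have hωt : ω a ≠ ⊤ := PMF.apply_ne_top ω a
    have hcancel : ω a * (∑' i : Fin n, s a i * (w i j / fmass ν i)) = ω a * t a j := by
      rw [← hE j a, ← ENNReal.tsum_mul_left]
      refine tsum_congr fun i => ?_
      have hci : (c i) a = (ω a * s a i) / fmass ν i := by
        rw [hc]
        rw [ncond_apply_of_ne ν i (hS0 i), hν, bind_gr_apply]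
      rw [hci]
      simp only [div_eq_mul_inv]
      ring
    have := congrArg (fun x => (ω a)⁻¹ * x) hcancel
    simpa [← mul_assoc, ENNReal.inv_mul_cancel hωa hωt] using this
  
end HyperNorm
end
end
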